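/- Let p be a prime with 2 a primitive root modulo p. Then there exists a double circulant binary code of parameters [2p, p, d] with d > w for every positive real number w satisfying 2|B_{2p}(w)| < p·2^p, where B_{2p}(w) is the set of nonzero vectors of length 2p and weight at most w. -/

import Mathlib

open Finset
open scoped Classical

/-- The number of nonzero vectors of `F_2^N` of Hamming weight at most `v` (real radius). -/
noncomputable def ballCardR (N : ℕ) (v : ℝ) : ℕ :=
  (Finset.univ.filter (fun x : Fin N → ZMod 2 => x ≠ 0 ∧ (hammingNorm x : ℝ) ≤ v)).card

set_option linter.unusedSectionVars false
set_option maxHeartbeats 1000000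
open Polynomial


namespace DCGV

abbrev V (q : ℕ) := ZMod q → ZMod 2

variable {q : ℕ} [NeZero q]

def conv (a b : V q) : V q := fun i => ∑ j, a (i - j) * b j

def allones : V q := fun _ => 1

noncomputable def Pol (a : V q) : Polynomial (ZMod 2) :=
  ∑ i : ZMod q, Polynomial.C (a i) * Polynomial.X ^ i.val

lemma coeff_Pol (a : V q) (j : ZMod q) : (Pol a).coeff j.val = a j := by
  rw [Pol, finset_sum_coeff]
  simp only [coeff_C_mul, coeff_X_pow, mul_ite, mul_one, mul_zero]
  rw [Finset.sum_eq_single j]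
  · simp
  · intro i _ hij
    rw [if_neg]
    exact fun h => hij (ZMod.val_injective q h.symm)
  · simp

lemma Pol_sub (a b : V q) : Pol (a - b) = Pol a - Pol b := by
  rw [Pol, Pol, Pol, ← Finset.sum_sub_distrib]
  refine Finset.sum_congr rfl fun i _ => ?_
  rw [← sub_mul, ← Polynomial.C_sub]
  rfl

lemma Pol_zero : Pol (0 : V q) = 0 := by simp [Pol]

lemma degree_Pol_lt (a : V q) : (Pol a).degree < (q : ℕ) := by
  refine lt_of_le_of_lt (Polynomial.degree_sum_le _ _) ?_
  rw [Finset.sup_lt_iff (by exact_mod_cast WithBot.bot_lt_coe (q:ℕ))]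
  intro i _
  refine lt_of_le_of_lt (Polynomial.degree_C_mul_X_pow_le _ _) ?_
  exact_mod_cast ZMod.val_lt i

lemma Pol_inj : Function.Injective (Pol (q := q)) := by
  intro a b h
  funext j
  rw [← coeff_Pol a j, ← coeff_Pol b j, h]

lemma Pol_allones : Pol (allones : V q) = ∑ k ∈ Finset.range q, Polynomial.X ^ k := by
  rw [Pol]
  refine Finset.sum_nbij' (fun i => i.val) (fun k => (k : ZMod q)) ?_ ?_ ?_ ?_ ?_
  · intro i _; exact Finset.mem_range.mpr (ZMod.val_lt i)
  · intro k _; exact Finset.mem_univ _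
  · intro i _; exact ZMod.natCast_rightInverse i
  · intro k hk; exact ZMod.val_cast_of_lt (Finset.mem_range.mp hk)
  · intro i _; simp [allones]

end DCGV

namespace DCGV
variable {q : ℕ} [NeZero q]

noncomputable abbrev fq (q : ℕ) : Polynomial (ZMod 2) := Polynomial.X ^ q - 1

noncomputable abbrev Rq (q : ℕ) := AdjoinRoot (fq q)

lemma root_pow_q : (AdjoinRoot.root (fq q)) ^ q = 1 := by
  have h : AdjoinRoot.mk (fq q) (fq q) = 0 := AdjoinRoot.mk_self
  rw [fq, map_sub, map_pow, AdjoinRoot.mk_X, map_one, sub_eq_zero] at h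
  exact h

lemma root_pow_mod (n : ℕ) : (AdjoinRoot.root (fq q)) ^ (n % q) = (AdjoinRoot.root (fq q)) ^ n := by
  conv_rhs => rw [← Nat.mod_add_div n q]
  rw [pow_add, pow_mul, root_pow_q, one_pow, mul_one]

lemma root_pow_val_add (i j : ZMod q) :
    (AdjoinRoot.root (fq q)) ^ (i + j).val
      = (AdjoinRoot.root (fq q)) ^ i.val * (AdjoinRoot.root (fq q)) ^ j.val := by
  rw [ZMod.val_add, root_pow_mod, pow_add]

lemma mk_Pol (a : V q) :
    AdjoinRoot.mk (fq q) (Pol a)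
      = ∑ i : ZMod q, algebraMap (ZMod 2) (Rq q) (a i) * (AdjoinRoot.root (fq q)) ^ i.val := by
  rw [Pol, map_sum]
  refine Finset.sum_congr rfl fun i _ => ?_
  rw [map_mul, map_pow, AdjoinRoot.mk_X, AdjoinRoot.mk_C]
  rfl

lemma mk_Pol_conv (a b : V q) :
    AdjoinRoot.mk (fq q) (Pol (conv a b))
      = AdjoinRoot.mk (fq q) (Pol a) * AdjoinRoot.mk (fq q) (Pol b) := by
  classical
  have lhs : ∑ k : ZMod q, algebraMap (ZMod 2) (Rq q) (conv a b k) * (AdjoinRoot.root (fq q)) ^ k.val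
      = ∑ k : ZMod q, ∑ j : ZMod q,
          algebraMap (ZMod 2) (Rq q) (a (k - j)) * algebraMap (ZMod 2) (Rq q) (b j)
            * (AdjoinRoot.root (fq q)) ^ k.val := by
    refine Finset.sum_congr rfl fun k _ => ?_
    rw [conv, map_sum, Finset.sum_mul]
    refine Finset.sum_congr rfl fun j _ => ?_
    rw [map_mul]
  have rhs2 : (∑ i : ZMod q, algebraMap (ZMod 2) (Rq q) (a i) * (AdjoinRoot.root (fq q)) ^ i.val)
        * (∑ j : ZMod q, algebraMap (ZMod 2) (Rq q) (b j) * (AdjoinRoot.root (fq q)) ^ j.val)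
      = ∑ j : ZMod q, ∑ k : ZMod q,
          algebraMap (ZMod 2) (Rq q) (a (k - j)) * algebraMap (ZMod 2) (Rq q) (b j)
            * (AdjoinRoot.root (fq q)) ^ k.val := by
    rw [Finset.sum_mul_sum, Finset.sum_comm]
    refine Finset.sum_congr rfl fun j _ => ?_
    refine Fintype.sum_equiv (Equiv.addRight j) _ _ fun i => ?_
    simp only [Equiv.coe_addRight, add_sub_cancel_right, root_pow_val_add]
    ring
  rw [mk_Pol, mk_Pol, mk_Pol, lhs, rhs2]
  exact Finset.sum_comm

end DCGV

namespace DCGV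

lemma factor_deg_ge (q : ℕ) (hq : q.Prime) (hq2 : q ≠ 2)
    (hroot : orderOf (2 : ZMod q) = q - 1)
    (g : Polynomial (ZMod 2)) (hg : Irreducible g) (hgdvd : g ∣ cyclotomic q (ZMod 2)) :
    q - 1 ≤ g.natDegree := by
  haveI : Fact q.Prime := ⟨hq⟩
  haveI : Fact (Irreducible g) := ⟨hg⟩
  set E := AdjoinRoot g with hE
  have hgne : g ≠ 0 := hg.ne_zero
  haveI : Module.Finite (ZMod 2) E := Module.Finite.of_basis (AdjoinRoot.powerBasis hgne).basis
  haveI : Finite E := Module.finite_of_finite (ZMod 2)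
  haveI : Fintype E := Fintype.ofFinite E
  classical
  have hcard : Fintype.card E = 2 ^ g.natDegree := by
    rw [Module.card_fintype (AdjoinRoot.powerBasis hgne).basis, ZMod.card, Fintype.card_fin,
      AdjoinRoot.powerBasis_dim]
  set ζ : E := AdjoinRoot.root g with hζ
  have hζq : ζ ^ q = 1 := by
    have hdvd : g ∣ (Polynomial.X ^ q - 1 : Polynomial (ZMod 2)) :=
      hgdvd.trans (Polynomial.cyclotomic.dvd_X_pow_sub_one q (ZMod 2))
    have h0 : AdjoinRoot.mk g (Polynomial.X ^ q - 1) = 0 := AdjoinRoot.mk_eq_zero.mpr hdvd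
    rwa [map_sub, map_pow, AdjoinRoot.mk_X, map_one, sub_eq_zero] at h0
  have hζ1 : ζ ≠ 1 := by
    intro h1
    have h0 : AdjoinRoot.mk g (cyclotomic q (ZMod 2)) = 0 := AdjoinRoot.mk_eq_zero.mpr hgdvd
    rw [Polynomial.cyclotomic_prime, map_sum] at h0
    have : (∑ i ∈ Finset.range q, AdjoinRoot.mk g (Polynomial.X ^ i)) = (q : E) := by
      have hone : ∀ i ∈ Finset.range q, AdjoinRoot.mk g (Polynomial.X ^ i) = 1 := fun i _ => by
        rw [map_pow, AdjoinRoot.mk_X, ← hζ, h1, one_pow]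
      rw [Finset.sum_congr rfl hone, Finset.sum_const, Finset.card_range, nsmul_eq_mul, mul_one]
    rw [this] at h0
    obtain ⟨k, hk⟩ := hq.odd_of_ne_two hq2
    rw [hk] at h0
    push_cast at h0
    have h2 : ((2 : ℕ) : E) = 0 := by
      have : ((2 : ℕ) : ZMod 2) = 0 := by decide
      rw [← map_natCast (algebraMap (ZMod 2) E), this, map_zero]
    push_cast at h2
    rw [Nat.cast_mul, Nat.cast_ofNat, h2, zero_mul, zero_add] at h0
    exact one_ne_zero h0
  have hord : orderOf ζ = q := orderOf_eq_prime hζq hζ1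
  have hζu : IsUnit ζ := by
    refine IsUnit.of_mul_eq_one (ζ ^ (q - 1)) ?_
    rw [← pow_succ', Nat.sub_add_cancel hq.one_le]
    exact hζq
  obtain ⟨u, hu⟩ := hζu
  have hordu : orderOf u = q := by rw [← hord, ← hu, orderOf_units]
  have hdvdcard : q ∣ 2 ^ g.natDegree - 1 := by
    have := orderOf_dvd_card (x := u)
    rwa [hordu, Fintype.card_units, hcard] at this
  have hpow : (2 : ZMod q) ^ g.natDegree = 1 := by
    have h0 : ((2 ^ g.natDegree - 1 : ℕ) : ZMod q) = 0 :=
      (ZMod.natCast_eq_zero_iff _ _).mpr hdvdcard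
    have h1 : ((2 ^ g.natDegree : ℕ) : ZMod q) = 1 := by
      rw [← Nat.sub_add_cancel (Nat.one_le_two_pow (n := g.natDegree))]
      push_cast [h0]
      simp [h0]
    push_cast at h1
    exact h1
  have hdd : q - 1 ∣ g.natDegree := by
    rw [← hroot]
    exact orderOf_dvd_of_pow_eq_one hpow
  have hdpos : 0 < g.natDegree := by
    rcases Nat.eq_zero_or_pos g.natDegree with h0 | h
    · exfalso
      have hdeg : g.degree = 0 := by
        rw [Polynomial.degree_eq_natDegree hgne, h0]; rfl
      exact hg.not_isUnit (Polynomial.isUnit_iff_degree_eq_zero.mpr hdeg)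
    · exact h
  exact Nat.le_of_dvd hdpos hdd

lemma cyclotomic_irred (q : ℕ) (hq : q.Prime) (hq2 : q ≠ 2)
    (hroot : orderOf (2 : ZMod q) = q - 1) :
    Irreducible (cyclotomic q (ZMod 2)) := by
  haveI : Fact q.Prime := ⟨hq⟩
  have hq3 : 3 ≤ q := by have := hq.two_le; omega
  have hΦne : cyclotomic q (ZMod 2) ≠ 0 := cyclotomic_ne_zero q (ZMod 2)
  have hΦdeg : (cyclotomic q (ZMod 2)).natDegree = q - 1 := by
    rw [natDegree_cyclotomic, Nat.totient_prime hq]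
  constructor
  · intro hunit
    have := Polynomial.natDegree_eq_zero_of_isUnit hunit
    omega
  · intro u v huv
    by_contra hcon
    push_neg at hcon
    obtain ⟨hu, hv⟩ := hcon
    have hu0 : u ≠ 0 := fun h => hΦne (by rw [huv, h, zero_mul])
    have hv0 : v ≠ 0 := fun h => hΦne (by rw [huv, h, mul_zero])
    obtain ⟨g, hgirr, hgu⟩ := WfDvdMonoid.exists_irreducible_factor hu hu0
    have hgΦ : g ∣ cyclotomic q (ZMod 2) := hgu.trans ⟨v, huv⟩
    have h1 : q - 1 ≤ g.natDegree := factor_deg_ge q hq hq2 hroot g hgirr hgΦ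
    have h2 : g.natDegree ≤ u.natDegree := Polynomial.natDegree_le_of_dvd hgu hu0
    have h3 : u.natDegree + v.natDegree = q - 1 := by
      rw [← Polynomial.natDegree_mul hu0 hv0, ← huv, hΦdeg]
    have h4 : 0 < v.natDegree := by
      rcases Nat.eq_zero_or_pos v.natDegree with h0 | h
      · exfalso
        have hdeg : v.degree = 0 := by
          rw [Polynomial.degree_eq_natDegree hv0, h0]; rfl
        exact hv (Polynomial.isUnit_iff_degree_eq_zero.mpr hdeg)
      · exact h
    omega

end DCGV

namespace DCGV

lemma Pol_dvd_cases {q : ℕ} [NeZero q] (hq : q.Prime) (c : V q)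
    (h : cyclotomic q (ZMod 2) ∣ Pol c) : c = 0 ∨ c = allones := by
  haveI : Fact q.Prime := ⟨hq⟩
  by_cases hc : c = 0
  · exact Or.inl hc
  right
  have hPc : Pol c ≠ 0 := fun h0 => hc (Pol_inj (by rw [h0, Pol_zero]))
  obtain ⟨t, ht⟩ := h
  have ht0 : t ≠ 0 := fun h0 => hPc (by rw [ht, h0, mul_zero])
  have hΦne : cyclotomic q (ZMod 2) ≠ 0 := cyclotomic_ne_zero q (ZMod 2)
  have hdeg : (Pol c).natDegree < q := by
    rw [Polynomial.natDegree_lt_iff_degree_lt hPc]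
    exact degree_Pol_lt c
  have hΦdeg : (cyclotomic q (ZMod 2)).natDegree = q - 1 := by
    rw [natDegree_cyclotomic, Nat.totient_prime hq]
  have hnd : (Pol c).natDegree = q - 1 + t.natDegree := by
    rw [ht, Polynomial.natDegree_mul hΦne ht0, hΦdeg]
  have htdeg : t.natDegree = 0 := by omega
  have htC : t = Polynomial.C (t.coeff 0) := Polynomial.eq_C_of_natDegree_eq_zero htdeg
  have hcoeff : t.coeff 0 ≠ 0 := fun h0 => ht0 (by rw [htC, h0, map_zero])
  have hone : t.coeff 0 = 1 := by
    revert hcoeff; generalize t.coeff 0 = z; revert z; decide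
  have ht1 : t = 1 := by rw [htC, hone, map_one]
  have : Pol c = Pol (allones : V q) := by
    rw [ht, ht1, mul_one, Pol_allones, Polynomial.cyclotomic_prime]
  exact Pol_inj this

lemma conv_eq_zero {q : ℕ} [NeZero q] (hq : q.Prime) (hq2 : q ≠ 2)
    (hroot : orderOf (2 : ZMod q) = q - 1) (y b : V q)
    (hb0 : b ≠ 0) (hb1 : b ≠ allones) (hy : conv y b = 0) :
    y = 0 ∨ y = allones := by
  haveI : Fact q.Prime := ⟨hq⟩
  have h := mk_Pol_conv y b
  rw [hy, Pol_zero, map_zero] at h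
  have hdvd : fq q ∣ Pol y * Pol b := by
    rw [← map_mul] at h
    exact AdjoinRoot.mk_eq_zero.mp h.symm
  have hΦdvd : cyclotomic q (ZMod 2) ∣ Pol y * Pol b := by
    refine dvd_trans ?_ hdvd
    refine ⟨Polynomial.X - 1, ?_⟩
    rw [Polynomial.cyclotomic_prime, fq, geom_sum_mul]
  have hprime : Prime (cyclotomic q (ZMod 2)) :=
    (cyclotomic_irred q hq hq2 hroot).prime
  rcases hprime.dvd_mul.mp hΦdvd with h1 | h2
  · exact Pol_dvd_cases hq y h1
  · exfalso
    rcases Pol_dvd_cases hq b h2 with h | h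
    · exact hb0 h
    · exact hb1 h

end DCGV

namespace DCGV
variable {q : ℕ} [NeZero q]

lemma hn_allones : hammingNorm (allones : V q) = q := by
  have h : (Finset.univ.filter (fun i : ZMod q => (allones : V q) i ≠ 0)) = Finset.univ := by
    ext i; simp [allones]
  rw [hammingNorm]
  show (Finset.univ.filter (fun i : ZMod q => (allones : V q) i ≠ 0)).card = q
  rw [h, Finset.card_univ, ZMod.card]

lemma hn_shift (v : V q) (k : ZMod q) : hammingNorm (fun i => v (i - k)) = hammingNorm v := by
  rw [hammingNorm, hammingNorm]
  refine Finset.card_bij' (fun i _ => i - k) (fun j _ => j + k) ?_ ?_ ?_ ?_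
  · intro i hi
    simpa using (by simpa using hi : v (i - k) ≠ 0)
  · intro j hj
    simpa using (by simpa using hj : v j ≠ 0)
  · intro i _; exact sub_add_cancel i k
  · intro j _; exact add_sub_cancel_right j k

lemma hn_compl {N : ℕ} (z : Fin N → ZMod 2) :
    hammingNorm (fun k => z k + 1) = N - hammingNorm z := by
  have key : ∀ u : ZMod 2, (u + 1 ≠ 0 ↔ ¬u ≠ 0) := by decide
  rw [hammingNorm, hammingNorm]
  show (Finset.univ.filter (fun k : Fin N => z k + 1 ≠ 0)).card
    = N - (Finset.univ.filter (fun k : Fin N => z k ≠ 0)).card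
  have h1 : (Finset.univ.filter (fun k : Fin N => z k + 1 ≠ 0))
      = Finset.univ.filter (fun k : Fin N => ¬ z k ≠ 0) := by
    ext k
    simp only [Finset.mem_filter]
    exact and_congr_right fun _ => key (z k)
  rw [h1]
  have h2 := Finset.card_filter_add_card_filter_not
    (s := (Finset.univ : Finset (Fin N))) (fun k => z k ≠ 0)
  simp only [not_le, Finset.card_univ, Fintype.card_fin] at h2 ⊢
  omega

lemma w_lt_q (hq : q.Prime) (w : ℝ)
    (hB : 2 * (ballCardR (2 * q) w : ℝ) < (q : ℝ) * 2 ^ q) : w < q := by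
  by_contra hcon
  push_neg at hcon
  set N := 2 * q with hN
  set U := Finset.univ.filter (fun z : Fin N → ZMod 2 => hammingNorm z ≤ q) with hU
  have hWU : (Finset.univ.filter (fun z : Fin N → ZMod 2 => ¬ hammingNorm z ≤ q)).card ≤ U.card := by
    refine Finset.card_le_card_of_injOn (fun z => fun k => z k + 1) ?_ ?_
    · intro z hz
      simp only [hU, Finset.mem_coe, Finset.mem_filter, Finset.mem_univ, true_and] at hz ⊢
      rw [hn_compl]
      have := hammingNorm_le_card_fintype (x := z)
      simp only [Fintype.card_fin] at this
      omega
    · intro z _ z' _ h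
      funext k
      have := congrFun h k
      simpa using this
  have hsplit := Finset.card_filter_add_card_filter_not
    (s := (Finset.univ : Finset (Fin N → ZMod 2))) (fun z => hammingNorm z ≤ q)
  rw [← hU] at hsplit
  have hcardU : (Finset.univ : Finset (Fin N → ZMod 2)).card = 2 ^ N := by
    rw [Finset.card_univ, Fintype.card_fun, ZMod.card, Fintype.card_fin]
  rw [hcardU] at hsplit
  simp only [not_le] at hsplit hWU
  have hUball : U.card ≤ ballCardR N w + 1 := by
    have hsub : U ⊆ insert 0 (Finset.univ.filter
        (fun x : Fin N → ZMod 2 => x ≠ 0 ∧ (hammingNorm x : ℝ) ≤ w)) := by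
      intro z hz
      simp only [hU, Finset.mem_filter, Finset.mem_univ, true_and] at hz
      by_cases h0 : z = 0
      · rw [h0]; exact Finset.mem_insert_self 0 _
      · refine Finset.mem_insert_of_mem ?_
        simp only [Finset.mem_filter, Finset.mem_univ, true_and]
        refine ⟨h0, le_trans ?_ hcon⟩
        exact_mod_cast Nat.cast_le.mpr hz
    calc U.card ≤ _ := Finset.card_le_card hsub
    _ ≤ ballCardR N w + 1 := Finset.card_insert_le _ _
  have harith : q * 2 ^ q + 2 ≤ 2 ^ N := by
    have h1 : q + 1 ≤ 2 ^ q := Nat.lt_two_pow_self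
    have h2 : 2 ≤ 2 ^ q := by
      calc 2 = 2 ^ 1 := rfl
      _ ≤ 2 ^ q := Nat.pow_le_pow_right (by norm_num) hq.one_lt.le
    calc q * 2 ^ q + 2 ≤ q * 2 ^ q + 2 ^ q := by omega
    _ = (q + 1) * 2 ^ q := by ring
    _ ≤ 2 ^ q * 2 ^ q := Nat.mul_le_mul_right _ h1
    _ = 2 ^ N := by rw [hN, two_mul, pow_add]
  have hfinal : q * 2 ^ q ≤ 2 * ballCardR N w := by omega
  have : (q : ℝ) * 2 ^ q ≤ 2 * (ballCardR N w : ℝ) := by exact_mod_cast hfinal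
  rw [hN] at this
  linarith

end DCGV

namespace DCGV
variable {q : ℕ} [NeZero q]

lemma q_le_2q : q ≤ 2 * q := by omega

noncomputable def glue (x : V q × V q) : Fin (2 * q) → ZMod 2 := fun k =>
  if h : k.val < q then x.1 ((k.val : ZMod q)) else x.2 (((k.val - q : ℕ) : ZMod q))

lemma glue_apply_fst (x : V q × V q) (i : ZMod q) :
    glue x ⟨i.val, lt_of_lt_of_le (ZMod.val_lt i) q_le_2q⟩ = x.1 i := by
  rw [glue, dif_pos (ZMod.val_lt i)]
  exact congrArg x.1 (ZMod.natCast_rightInverse i)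

lemma glue_apply_snd (x : V q × V q) (i : ZMod q) :
    glue x ⟨i.val + q, by have := ZMod.val_lt i; omega⟩ = x.2 i := by
  rw [glue, dif_neg (Nat.not_lt.mpr (Nat.le_add_left q i.val))]
  have : ((⟨i.val + q, by have := ZMod.val_lt i; omega⟩ : Fin (2*q)).val - q : ℕ) = i.val :=
    by show i.val + q - q = i.val; omega
  rw [this]
  exact congrArg x.2 (ZMod.natCast_rightInverse i)

lemma glue_inj : Function.Injective (glue (q := q)) := by
  intro x x' h
  have h1 : x.1 = x'.1 := by
    funext i
    rw [← glue_apply_fst x i, ← glue_apply_fst x' i, h]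
  have h2 : x.2 = x'.2 := by
    funext i
    rw [← glue_apply_snd x i, ← glue_apply_snd x' i, h]
  exact Prod.ext h1 h2

lemma glue_zero : glue (0 : V q × V q) = 0 := by
  funext k
  rw [glue]
  split <;> rfl

lemma hn_glue (x : V q × V q) :
    hammingNorm (glue x) = hammingNorm x.1 + hammingNorm x.2 := by
  rw [hammingNorm, hammingNorm, hammingNorm]
  show (Finset.univ.filter (fun k : Fin (2*q) => glue x k ≠ 0)).card
    = (Finset.univ.filter (fun i : ZMod q => x.1 i ≠ 0)).card
      + (Finset.univ.filter (fun i : ZMod q => x.2 i ≠ 0)).card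
  have hsplit := Finset.card_filter_add_card_filter_not
    (s := Finset.univ.filter (fun k : Fin (2*q) => glue x k ≠ 0)) (fun k => k.val < q)
  have hfst : ((Finset.univ.filter (fun k : Fin (2*q) => glue x k ≠ 0)).filter
      (fun k => k.val < q)).card = (Finset.univ.filter (fun i : ZMod q => x.1 i ≠ 0)).card := by
    refine Finset.card_bij' (fun k _ => ((k.val : ZMod q)))
      (fun i _ => ⟨i.val, lt_of_lt_of_le (ZMod.val_lt i) q_le_2q⟩) ?_ ?_ ?_ ?_
    · intro k hk
      simp only [Finset.mem_filter, Finset.mem_univ, true_and] at hk ⊢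
      obtain ⟨hne, hlt⟩ := hk
      rwa [glue, dif_pos hlt] at hne
    · intro i hi
      simp only [Finset.mem_filter, Finset.mem_univ, true_and] at hi ⊢
      rw [glue_apply_fst]
      exact ⟨hi, ZMod.val_lt i⟩
    · intro k hk
      simp only [Finset.mem_filter] at hk
      apply Fin.ext
      exact ZMod.val_cast_of_lt hk.2
    · intro i _
      exact ZMod.natCast_rightInverse i
  have hsnd : ((Finset.univ.filter (fun k : Fin (2*q) => glue x k ≠ 0)).filter
      (fun k => ¬ k.val < q)).card = (Finset.univ.filter (fun i : ZMod q => x.2 i ≠ 0)).card := by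
    refine Finset.card_bij' (fun k _ => (((k.val - q : ℕ) : ZMod q)))
      (fun i _ => ⟨i.val + q, by have := ZMod.val_lt i; omega⟩) ?_ ?_ ?_ ?_
    · intro k hk
      simp only [Finset.mem_filter, Finset.mem_univ, true_and] at hk ⊢
      obtain ⟨hne, hlt⟩ := hk
      rwa [glue, dif_neg hlt] at hne
    · intro i hi
      simp only [Finset.mem_filter, Finset.mem_univ, true_and] at hi ⊢
      rw [glue_apply_snd]
      refine ⟨hi, by omega⟩
    · intro k hk
      simp only [Finset.mem_filter, Finset.mem_univ, true_and] at hk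
      apply Fin.ext
      have hk2 : ¬ k.val < q := hk.2
      have hkq : k.val - q < q := by have := k.isLt; omega
      simp only
      rw [ZMod.val_cast_of_lt hkq]
      omega
    · intro i _
      simp only [Nat.add_sub_cancel]
      exact ZMod.natCast_rightInverse i
  omega

lemma S_card_le (w : ℝ) :
    (Finset.univ.filter (fun x : V q × V q =>
      x ≠ 0 ∧ ((hammingNorm x.1 + hammingNorm x.2 : ℕ) : ℝ) ≤ w)).card
      ≤ ballCardR (2 * q) w := by
  rw [ballCardR]
  refine Finset.card_le_card_of_injOn glue ?_ glue_inj.injOn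
  intro x hx
  simp only [Finset.mem_coe, Finset.mem_filter, Finset.mem_univ, true_and] at hx ⊢
  obtain ⟨hx0, hxw⟩ := hx
  refine ⟨fun h0 => hx0 (glue_inj (h0.trans glue_zero.symm)), ?_⟩
  rw [hn_glue]
  exact_mod_cast hxw

end DCGV


namespace DCGV
variable {q : ℕ} [NeZero q]

lemma conv_sub (a b c : V q) : conv (a - b) c = conv a c - conv b c := by
  funext i
  show (∑ j, (a - b) (i - j) * c j) = (∑ j, a (i - j) * c j) - ∑ j, b (i - j) * c j
  rw [← Finset.sum_sub_distrib]
  refine Finset.sum_congr rfl fun j _ => ?_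
  rw [Pi.sub_apply, sub_mul]

lemma const_of_period (hq : q.Prime) {v : V q} {d : ZMod q} (hd : d ≠ 0)
    (h : ∀ j, v (j + d) = v j) : ∀ j, v j = v 0 := by
  haveI : Fact q.Prime := ⟨hq⟩
  have hn : ∀ n : ℕ, ∀ j, v (j + n • d) = v j := by
    intro n
    induction n with
    | zero => intro j; simp
    | succ n ih =>
      intro j
      rw [succ_nsmul, ← add_assoc, h (j + n • d)]
      exact ih j
  intro j
  have hkey := hn ((j * d⁻¹).val) 0
  rw [zero_add] at hkey
  have hcalc : ((j * d⁻¹).val : ℕ) • d = j := by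
    rw [nsmul_eq_mul, ZMod.natCast_rightInverse (j * d⁻¹), mul_assoc,
      inv_mul_cancel₀ hd, mul_one]
  rw [hcalc] at hkey
  exact hkey

def shiftp (k : ZMod q) (x : V q × V q) : V q × V q :=
  (fun i => x.1 (i - k), fun i => x.2 (i - k))

lemma conv_shift (a b : V q) (k : ZMod q) :
    conv a (fun i => b (i - k)) = fun i => conv a b (i - k) := by
  funext i
  show (∑ j, a (i - j) * b (j - k)) = ∑ j, a ((i - k) - j) * b j
  refine Fintype.sum_equiv (Equiv.subRight k) _ _ fun j => ?_
  simp only [Equiv.subRight_apply]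
  rw [sub_sub_sub_cancel_right]

lemma shift_eq_iff (F G : V q) (k : ZMod q) :
    ((fun i => F (i - k)) = fun i => G (i - k)) ↔ F = G := by
  constructor
  · intro h
    funext j
    have := congrFun h (j + k)
    simpa [add_sub_cancel_right] using this
  · intro h; rw [h]

theorem master (q : ℕ) [NeZero q] (hq : q.Prime)
    (hroot : orderOf (2 : ZMod q) = q - 1) (w : ℝ) (hw : 0 < w)
    (hB : 2 * (ballCardR (2 * q) w : ℝ) < (q : ℝ) * 2 ^ q) :
    ∃ a : V q, ∀ x : V q × V q, x ≠ 0 →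
      (∀ i : ZMod q, x.1 i + ∑ j : ZMod q, a (i - j) * x.2 j = 0) →
      w < ((hammingNorm x.1 + hammingNorm x.2 : ℕ) : ℝ) := by
  haveI : Fact q.Prime := ⟨hq⟩
  have hq2 : q ≠ 2 := by
    intro h
    subst h
    exact absurd (orderOf_eq_one_iff.mp hroot) (by decide)
  have hwq : w < q := w_lt_q hq w hB
  classical
  set S : Finset (V q × V q) := Finset.univ.filter (fun x =>
    x ≠ 0 ∧ ((hammingNorm x.1 + hammingNorm x.2 : ℕ) : ℝ) ≤ w) with hS
  set Ax : V q × V q → Finset (V q) := fun x =>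
    Finset.univ.filter (fun a => conv a x.2 = x.1) with hAx
  have hmem : ∀ x ∈ S, x ≠ 0 ∧ (hammingNorm x.1 + hammingNorm x.2 : ℕ) < q
      ∧ ((hammingNorm x.1 + hammingNorm x.2 : ℕ) : ℝ) ≤ w := by
    intro x hx
    rw [hS, Finset.mem_filter] at hx
    obtain ⟨-, hx0, hxw⟩ := hx
    refine ⟨hx0, ?_, hxw⟩
    by_contra hge
    push_neg at hge
    have : (q : ℝ) ≤ ((hammingNorm x.1 + hammingNorm x.2 : ℕ) : ℝ) := by exact_mod_cast hge
    linarith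
  have hAxcard : ∀ x ∈ S, (Ax x).card ≤ 2 := by
    intro x hx
    obtain ⟨hx0, hxw, -⟩ := hmem x hx
    by_cases hx2 : x.2 = 0
    · have hx1 : x.1 ≠ 0 := by
        intro h1
        exact hx0 (Prod.ext_iff.mpr ⟨h1, hx2⟩)
      have hempty : Ax x = ∅ := by
        rw [hAx]
        refine Finset.eq_empty_iff_forall_notMem.mpr fun a ha => ?_
        simp only [Finset.mem_filter, Finset.mem_univ, true_and] at ha
        apply hx1
        rw [← ha, hx2]
        funext i
        show (∑ j, a (i - j) * (0 : V q) j) = 0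
        simp
      rw [hempty]
      simp
    · have hb1 : x.2 ≠ allones := by
        intro h1
        have h2 : hammingNorm x.2 = q := by rw [h1, hn_allones]
        omega
      rcases Finset.eq_empty_or_nonempty (Ax x) with he | ⟨a0, ha0⟩
      · rw [he]; simp
      · have hca0 : conv a0 x.2 = x.1 := by
          rw [hAx] at ha0
          simpa using ha0
        have hsub : Ax x ⊆ {a0, a0 + allones} := by
          intro a ha
          rw [hAx] at ha
          simp only [Finset.mem_filter, Finset.mem_univ, true_and] at ha
          have hdiff : conv (a - a0) x.2 = 0 := by
            rw [conv_sub, ha, hca0, sub_self]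
          rcases conv_eq_zero hq hq2 hroot (a - a0) x.2 hx2 hb1 hdiff with h | h
          · have : a = a0 := by
              have := sub_eq_zero.mp h
              exact this
            rw [this]
            exact Finset.mem_insert_self _ _
          · have : a = a0 + allones := by
              rw [← h]; ring
            rw [this]
            exact Finset.mem_insert_of_mem (Finset.mem_singleton_self _)
        calc (Ax x).card ≤ ({a0, a0 + allones} : Finset (V q)).card := Finset.card_le_card hsub
        _ ≤ 2 := le_trans (Finset.card_insert_le _ _) (by rw [Finset.card_singleton])
  have hfiber : ∀ t ∈ S.image Ax, q ≤ (S.filter (fun x => Ax x = t)).card := by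
    intro t ht
    obtain ⟨x₀, hx₀, rfl⟩ := Finset.mem_image.mp ht
    obtain ⟨hx0, hxw, hxwr⟩ := hmem x₀ hx₀
    have hinj : Set.InjOn (fun k => shiftp k x₀) ((Finset.univ : Finset (ZMod q)) : Set (ZMod q)) := by
      intro k _ k' _ h
      by_contra hkk
      have h1 : ∀ i, x₀.1 (i - k) = x₀.1 (i - k') := fun i =>
        congrFun (congrArg Prod.fst h) i
      have h2 : ∀ i, x₀.2 (i - k) = x₀.2 (i - k') := fun i =>
        congrFun (congrArg Prod.snd h) i
      have hd0 : k - k' ≠ 0 := sub_ne_zero.mpr hkk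
      have p1 : ∀ j, x₀.1 (j + (k - k')) = x₀.1 j := by
        intro j
        have hh := h1 (j + k)
        rw [add_sub_cancel_right] at hh
        rw [show j + (k - k') = j + k - k' from by ring]
        exact hh.symm
      have p2 : ∀ j, x₀.2 (j + (k - k')) = x₀.2 j := by
        intro j
        have hh := h2 (j + k)
        rw [add_sub_cancel_right] at hh
        rw [show j + (k - k') = j + k - k' from by ring]
        exact hh.symm
      have c1 := const_of_period hq hd0 p1
      have c2 := const_of_period hq hd0 p2
      have hone : ∀ z : ZMod 2, z ≠ 0 → z = 1 := by decide
      by_cases hz1 : x₀.1 0 = 0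
      · by_cases hz2 : x₀.2 0 = 0
        · apply hx0
          refine Prod.ext_iff.mpr ⟨?_, ?_⟩ <;> funext j
          · exact (c1 j).trans hz1
          · exact (c2 j).trans hz2
        · have hall : x₀.2 = allones := funext fun j => (c2 j).trans (hone _ hz2)
          have := hn_allones (q := q)
          rw [← hall] at this
          omega
      · have hall : x₀.1 = allones := funext fun j => (c1 j).trans (hone _ hz1)
        have := hn_allones (q := q)
        rw [← hall] at this
        omega
    have hmaps : ∀ k : ZMod q, shiftp k x₀ ∈ S.filter (fun x => Ax x = Ax x₀) := by
      intro k
      rw [Finset.mem_filter]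
      refine ⟨?_, ?_⟩
      · rw [hS, Finset.mem_filter]
        refine ⟨Finset.mem_univ _, ?_, ?_⟩
        · intro h0
          apply hx0
          refine Prod.ext_iff.mpr ⟨?_, ?_⟩ <;> funext i
          · have := congrFun (congrArg Prod.fst h0) (i + k)
            rwa [show (shiftp k x₀).1 (i + k) = x₀.1 i from by
              show x₀.1 (i + k - k) = x₀.1 i; rw [add_sub_cancel_right]] at this
          · have := congrFun (congrArg Prod.snd h0) (i + k)
            rwa [show (shiftp k x₀).2 (i + k) = x₀.2 i from by
              show x₀.2 (i + k - k) = x₀.2 i; rw [add_sub_cancel_right]] at this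
        · show ((hammingNorm (shiftp k x₀).1 + hammingNorm (shiftp k x₀).2 : ℕ) : ℝ) ≤ w
          have e1 : hammingNorm (shiftp k x₀).1 = hammingNorm x₀.1 := hn_shift x₀.1 k
          have e2 : hammingNorm (shiftp k x₀).2 = hammingNorm x₀.2 := hn_shift x₀.2 k
          rw [e1, e2]
          exact hxwr
      · have hiff : ∀ a, (conv a (shiftp k x₀).2 = (shiftp k x₀).1 ↔ conv a x₀.2 = x₀.1) := by
          intro a
          show (conv a (fun i => x₀.2 (i - k)) = fun i => x₀.1 (i - k)) ↔ _
          rw [conv_shift]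
          exact shift_eq_iff _ _ k
        rw [hAx]
        ext a
        simp only [Finset.mem_filter, Finset.mem_univ, true_and]
        exact hiff a
    calc q = ((Finset.univ : Finset (ZMod q))).card := by rw [Finset.card_univ, ZMod.card]
    _ ≤ _ := Finset.card_le_card_of_injOn _ (fun k _ => hmaps k) hinj
  have hqT : q * (S.image Ax).card ≤ S.card :=
    Finset.mul_card_image_le_card_of_maps_to (fun x hx => Finset.mem_image_of_mem Ax hx) q hfiber
  set Bad : Finset (V q) := (S.image Ax).biUnion id with hBad
  have hBadcard : Bad.card ≤ 2 * (S.image Ax).card := by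
    refine le_trans Finset.card_biUnion_le ?_
    calc ∑ t ∈ S.image Ax, (id t).card ≤ (S.image Ax).card • 2 := by
          refine Finset.sum_le_card_nsmul _ _ 2 ?_
          intro t ht
          obtain ⟨x, hx, rfl⟩ := Finset.mem_image.mp ht
          exact hAxcard x hx
    _ = 2 * (S.image Ax).card := by rw [smul_eq_mul, mul_comm]
  have hSball : S.card ≤ ballCardR (2 * q) w := S_card_le w
  have hexists : ∃ a : V q, a ∉ Bad := by
    by_contra hall
    push_neg at hall
    have hsub : (Finset.univ : Finset (V q)) ⊆ Bad := fun a _ => hall a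
    have hcards := Finset.card_le_card hsub
    rw [Finset.card_univ, Fintype.card_fun, ZMod.card, ZMod.card] at hcards
    have h1 : q * 2 ^ q ≤ 2 * ballCardR (2 * q) w := by
      calc q * 2 ^ q ≤ q * Bad.card := Nat.mul_le_mul_left q hcards
      _ ≤ q * (2 * (S.image Ax).card) := Nat.mul_le_mul_left q hBadcard
      _ = 2 * (q * (S.image Ax).card) := by ring
      _ ≤ 2 * S.card := Nat.mul_le_mul_left 2 hqT
      _ ≤ 2 * ballCardR (2 * q) w := Nat.mul_le_mul_left 2 hSball
    have h2 : (q : ℝ) * 2 ^ q ≤ 2 * (ballCardR (2 * q) w : ℝ) := by exact_mod_cast h1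
    linarith
  obtain ⟨a, ha⟩ := hexists
  refine ⟨a, ?_⟩
  intro x hx0 hcode
  by_contra hle
  push_neg at hle
  have hxS : x ∈ S := by
    rw [hS, Finset.mem_filter]
    exact ⟨Finset.mem_univ _, hx0, hle⟩
  have haAx : a ∈ Ax x := by
    rw [hAx]
    simp only [Finset.mem_filter, Finset.mem_univ, true_and]
    funext i
    have h2 : ∀ u v : ZMod 2, u + v = 0 → v = u := by decide
    exact h2 _ _ (hcode i)
  exact ha (Finset.mem_biUnion.mpr ⟨Ax x, Finset.mem_image_of_mem Ax hxS, haAx⟩)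

end DCGV

/-- Theorem 2 (th:simple) of the paper: if `p` is prime and `2` is primitive modulo `p`,
then for every positive real `w` with `2|B_{2p}(w)| < p·2^p` there exists a double circulant
`[2p, p]` code (parity-check matrix `[I_p | A]`, `A` circulant with entries `A_{ij} = a_{i-j}`)
of minimum distance `> w`. -/
theorem double_circulant_gv_improved (p : ℕ) (hp : p.Prime)
    (hroot : orderOf (2 : ZMod p) = p - 1) (w : ℝ) (hw : 0 < w)
    (hB : 2 * (ballCardR (2 * p) w : ℝ) < (p : ℝ) * 2 ^ p) :
    ∃ a : Fin p → ZMod 2,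
      ∀ x : (Fin p → ZMod 2) × (Fin p → ZMod 2), x ≠ 0 →
        (∀ i : Fin p, x.1 i + ∑ j : Fin p, a (i - j) * x.2 j = 0) →
        w < ((hammingNorm x.1 + hammingNorm x.2 : ℕ) : ℝ) := by
  obtain ⟨m, rfl⟩ := Nat.exists_eq_succ_of_ne_zero hp.ne_zero
  exact DCGV.master (m + 1) hp hroot w hw hB
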